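/- Fix a finite set 𝔯 of resources and a finite alphabet A with involution a ↦ ā and resource map ρ : A → 2^𝔯 with ρ(ā) = ρ(a) and ρ(a) ≠ ∅ for all a ∈ A. Let N_L be the finite monoid with involution of triples and zero described above, and let M(A,ρ) be the trace monoid with its involution. Then there is a (unique) morphism of monoids with involution μ_L : M(A,ρ) → N_L with μ_L(a) = ({a}, ρ(a), {a}) for every letter a ∈ A, and for every g ∈ M(A,ρ): μ_L(g) ≠ 0 if and only if g is reduced, i.e., there are no p, q ∈ M(A,ρ) and a ∈ A with g = p·(a ā)·q. -/

import Mathlib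

open scoped Classical

universe u

/-- The partial-commutation relation on words: `ab = ba` whenever `ρ a ∩ ρ b = ∅`. -/
def traceRel {R : Type u} (Γ : Type u) (ρ : Γ → Set R) :
    FreeMonoid Γ → FreeMonoid Γ → Prop := fun u v =>
  ∃ a b : Γ, ρ a ∩ ρ b = ∅ ∧ u = FreeMonoid.of a * FreeMonoid.of b ∧
    v = FreeMonoid.of b * FreeMonoid.of a

/-- The congruence on the free monoid generated by partial commutation. -/
def traceCon {R : Type u} (Γ : Type u) (ρ : Γ → Set R) : Con (FreeMonoid Γ) :=
  conGen (traceRel Γ ρ)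

/-- The trace monoid `M(Γ, ρ)`. -/
abbrev Trace {R : Type u} (Γ : Type u) (ρ : Γ → Set R) : Type u :=
  (traceCon Γ ρ).Quotient

/-- Canonical projection from words to traces. -/
def traceMk {R Γ : Type u} (ρ : Γ → Set R) : FreeMonoid Γ →* Trace Γ ρ :=
  (traceCon Γ ρ).mk'

/-- The trace of a single letter. -/
def traceOf {R Γ : Type u} (ρ : Γ → Set R) (a : Γ) : Trace Γ ρ :=
  traceMk ρ (FreeMonoid.of a)

/-- Word-level involution: reverse the word and apply `bar` letterwise. -/
def wordStar {Γ : Type u} (bar : Γ → Γ) (u : FreeMonoid Γ) : FreeMonoid Γ :=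
  FreeMonoid.ofList (((FreeMonoid.toList u).map bar).reverse)

/-- The carrier of `N_L`: a zero element (`none`) together with triples
`(P, S, R) ∈ 2^A × 2^𝔯 × 2^A`. -/
abbrev NLCarrier (A R : Type u) : Type u := Option (Set A × Set R × Set A)

/-- The defining conditions of `N_L`: `ρ(a) ⊆ S` for all `a ∈ P ∪ R`, and the letters of
`P` (resp. of `R`) are pairwise resource-disjoint. -/
def NLValid {A R : Type u} (ρ : A → Set R) : NLCarrier A R → Prop
  | none => True
  | some (P, S, Rt) =>
      (∀ a ∈ P ∪ Rt, ρ a ⊆ S) ∧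
      (∀ a ∈ P, ∀ b ∈ P, a ≠ b → ρ a ∩ ρ b = ∅) ∧
      (∀ a ∈ Rt, ∀ b ∈ Rt, a ≠ b → ρ a ∩ ρ b = ∅)

/-- Multiplication of `N_L`: `0` is absorbing; `(P,S,R)·(P',S',R') = 0` if some `a ∈ R`
has `ā ∈ P'`, and otherwise it is
`(P ∪ {a ∈ P' : ρ a ∩ S = ∅}, S ∪ S', R' ∪ {a ∈ R : ρ a ∩ S' = ∅})`. -/
noncomputable def NLmul {A R : Type u} (bar : A → A) (ρ : A → Set R) :
    NLCarrier A R → NLCarrier A R → NLCarrier A R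
  | none, _ => none
  | _, none => none
  | some (P, S, Rt), some (P', S', R') =>
      if ∃ a ∈ Rt, bar a ∈ P' then none
      else some (P ∪ {a ∈ P' | ρ a ∩ S = ∅}, S ∪ S', R' ∪ {a ∈ Rt | ρ a ∩ S' = ∅})

/-- The identity element `(∅, ∅, ∅)` of `N_L`. -/
def NLone {A R : Type u} : NLCarrier A R := some (∅, ∅, ∅)

/-- The involution of `N_L`: `0̄ = 0` and `(P,S,R)‾ = (R̄, S, P̄)`. -/
def NLstar {A R : Type u} (bar : A → A) : NLCarrier A R → NLCarrier A R
  | none => none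
  | some (P, S, Rt) => some (bar '' Rt, S, bar '' P)

section Aux

variable {R A : Type u} (bar : A → A) (ρ : A → Set R)

/-- Image of a single letter. -/
noncomputable def NLgen (a : A) : NLCarrier A R := some ({a}, ρ a, {a})

lemma NLmul_none_left (x : NLCarrier A R) : NLmul bar ρ none x = none := by
  cases x <;> rfl

lemma NLmul_none_right (x : NLCarrier A R) : NLmul bar ρ x none = none := by
  cases x <;> rfl

lemma NLmul_one_left (x : NLCarrier A R) : NLmul bar ρ NLone x = x := by
  cases x with
  | none => rfl
  | some t =>
    obtain ⟨P, S, Rt⟩ := t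
    show NLmul bar ρ (some (∅, ∅, ∅)) (some (P, S, Rt)) = some (P, S, Rt)
    rw [NLmul, if_neg]
    · congr 1
      refine Prod.ext ?_ (Prod.ext ?_ ?_) <;> simp
    · rintro ⟨a, ha, -⟩; exact ha

lemma NLmul_one_right (x : NLCarrier A R) : NLmul bar ρ x NLone = x := by
  cases x with
  | none => rfl
  | some t =>
    obtain ⟨P, S, Rt⟩ := t
    show NLmul bar ρ (some (P, S, Rt)) (some (∅, ∅, ∅)) = some (P, S, Rt)
    rw [NLmul, if_neg]
    · congr 1
      refine Prod.ext ?_ (Prod.ext ?_ ?_) <;> simp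
    · rintro ⟨a, -, ha⟩; exact ha

lemma NLmul_assoc (hρ : ∀ a, ρ (bar a) = ρ a) (x y z : NLCarrier A R) :
    NLmul bar ρ (NLmul bar ρ x y) z = NLmul bar ρ x (NLmul bar ρ y z) := by
  cases x with
  | none => simp only [NLmul_none_left]
  | some xt =>
    cases y with
    | none => simp only [NLmul_none_left, NLmul_none_right]
    | some yt =>
      cases z with
      | none => simp only [NLmul_none_right]
      | some zt =>
        obtain ⟨P1, S1, R1⟩ := xt
        obtain ⟨P2, S2, R2⟩ := yt
        obtain ⟨P3, S3, R3⟩ := zt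
        by_cases h12 : ∃ a ∈ R1, bar a ∈ P2
        · have hxy : NLmul bar ρ (some (P1, S1, R1)) (some (P2, S2, R2)) = none := by
            rw [NLmul, if_pos h12]
          rw [hxy, NLmul_none_left]
          by_cases h23 : ∃ a ∈ R2, bar a ∈ P3
          · have hyz : NLmul bar ρ (some (P2, S2, R2)) (some (P3, S3, R3)) = none := by
              rw [NLmul, if_pos h23]
            rw [hyz, NLmul_none_right]
          · have hyz : NLmul bar ρ (some (P2, S2, R2)) (some (P3, S3, R3)) =
                some (P2 ∪ {a ∈ P3 | ρ a ∩ S2 = ∅}, S2 ∪ S3, R3 ∪ {a ∈ R2 | ρ a ∩ S3 = ∅}) := by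
              rw [NLmul, if_neg h23]
            rw [hyz]
            obtain ⟨a, ha, hb⟩ := h12
            rw [NLmul, if_pos ⟨a, ha, Or.inl hb⟩]
        · have hxy : NLmul bar ρ (some (P1, S1, R1)) (some (P2, S2, R2)) =
              some (P1 ∪ {a ∈ P2 | ρ a ∩ S1 = ∅}, S1 ∪ S2, R2 ∪ {a ∈ R1 | ρ a ∩ S2 = ∅}) := by
            rw [NLmul, if_neg h12]
          rw [hxy]
          by_cases h23 : ∃ a ∈ R2, bar a ∈ P3
          · have hyz : NLmul bar ρ (some (P2, S2, R2)) (some (P3, S3, R3)) = none := by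
              rw [NLmul, if_pos h23]
            rw [hyz, NLmul_none_right]
            obtain ⟨a, ha, hb⟩ := h23
            rw [NLmul, if_pos ⟨a, Or.inl ha, hb⟩]
          · have hyz : NLmul bar ρ (some (P2, S2, R2)) (some (P3, S3, R3)) =
                some (P2 ∪ {a ∈ P3 | ρ a ∩ S2 = ∅}, S2 ∪ S3, R3 ∪ {a ∈ R2 | ρ a ∩ S3 = ∅}) := by
              rw [NLmul, if_neg h23]
            rw [hyz]
            have hiff : (∃ a ∈ R2 ∪ {a ∈ R1 | ρ a ∩ S2 = ∅}, bar a ∈ P3) ↔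
                (∃ a ∈ R1, bar a ∈ P2 ∪ {a ∈ P3 | ρ a ∩ S2 = ∅}) := by
              constructor
              · rintro ⟨a, (ha | ⟨ha, hd⟩), hb⟩
                · exact absurd ⟨a, ha, hb⟩ h23
                · exact ⟨a, ha, Or.inr ⟨hb, by rw [hρ]; exact hd⟩⟩
              · rintro ⟨a, ha, (hb | ⟨hb, hd⟩)⟩
                · exact absurd ⟨a, ha, hb⟩ h12
                · rw [hρ] at hd
                  exact ⟨a, Or.inr ⟨ha, hd⟩, hb⟩
            by_cases hc : ∃ a ∈ R2 ∪ {a ∈ R1 | ρ a ∩ S2 = ∅}, bar a ∈ P3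
            · rw [NLmul, if_pos hc, NLmul, if_pos (hiff.mp hc)]
            · rw [NLmul, if_neg hc, NLmul, if_neg (fun h => hc (hiff.mpr h))]
              congr 1
              refine Prod.ext ?_ (Prod.ext ?_ ?_)
              · ext a
                simp only [Set.mem_union, Set.mem_sep_iff, Set.mem_setOf_eq,
                  Set.inter_union_distrib_left, Set.union_empty_iff]
                tauto
              · simp [Set.union_assoc]
              · ext a
                simp only [Set.mem_union, Set.mem_sep_iff, Set.mem_setOf_eq,
                  Set.inter_union_distrib_left, Set.union_empty_iff]
                tauto

lemma NLgen_comm (hρ : ∀ a, ρ (bar a) = ρ a) (hρne : ∀ a : A, ρ a ≠ ∅) {a b : A} (h : ρ a ∩ ρ b = ∅) :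
    NLmul bar ρ (NLgen ρ a) (NLgen ρ b) = NLmul bar ρ (NLgen ρ b) (NLgen ρ a) := by
  have hab : bar a ≠ b := by
    rintro rfl
    rw [hρ, Set.inter_self] at h
    exact hρne a h
  have hba : bar b ≠ a := by
    intro e
    rw [← e, hρ, Set.inter_comm, Set.inter_self] at h
    exact hρne b h
  have h' : ρ b ∩ ρ a = ∅ := by rw [Set.inter_comm]; exact h
  have e1 : {x ∈ ({b} : Set A) | ρ x ∩ ρ a = ∅} = {b} := by
    ext x
    simp only [Set.mem_sep_iff, Set.mem_singleton_iff]
    constructor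
    · rintro ⟨h1, -⟩; exact h1
    · rintro rfl; exact ⟨rfl, h'⟩
  have e2 : {x ∈ ({a} : Set A) | ρ x ∩ ρ b = ∅} = {a} := by
    ext x
    simp only [Set.mem_sep_iff, Set.mem_singleton_iff]
    constructor
    · rintro ⟨h1, -⟩; exact h1
    · rintro rfl; exact ⟨rfl, h⟩
  show NLmul bar ρ (some ({a}, ρ a, {a})) (some ({b}, ρ b, {b})) =
    NLmul bar ρ (some ({b}, ρ b, {b})) (some ({a}, ρ a, {a}))
  rw [NLmul, if_neg, NLmul, if_neg]
  · rw [e1, e2]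
    congr 1
    refine Prod.ext ?_ (Prod.ext ?_ ?_)
    · exact Set.union_comm _ _
    · exact Set.union_comm _ _
    · exact Set.union_comm _ _
  · rintro ⟨x, hx, hx'⟩
    rw [Set.mem_singleton_iff] at hx hx'
    subst hx; exact hba hx'
  · rintro ⟨x, hx, hx'⟩
    rw [Set.mem_singleton_iff] at hx hx'
    subst hx; exact hab hx'

lemma NLstar_gen (hρ : ∀ a, ρ (bar a) = ρ a) (a : A) : NLstar bar (NLgen ρ a) = NLgen ρ (bar a) := by
  show NLstar bar (some ({a}, ρ a, {a})) = some ({bar a}, ρ (bar a), {bar a})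
  rw [NLstar, hρ]
  congr 1
  refine Prod.ext ?_ (Prod.ext rfl ?_) <;> simp

lemma image_sep (hρ : ∀ a, ρ (bar a) = ρ a) (s : Set A) (T : Set R) :
    bar '' {a ∈ s | ρ a ∩ T = ∅} = {a ∈ bar '' s | ρ a ∩ T = ∅} := by
  ext x
  constructor
  · rintro ⟨c, ⟨hc, hd⟩, rfl⟩
    exact ⟨⟨c, hc, rfl⟩, by rw [hρ]; exact hd⟩
  · rintro ⟨⟨c, hc, rfl⟩, hd⟩
    rw [hρ] at hd
    exact ⟨c, ⟨hc, hd⟩, rfl⟩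

lemma NLstar_mul (hρ : ∀ a, ρ (bar a) = ρ a) (hbar : Function.Involutive bar) (x y : NLCarrier A R) :
    NLstar bar (NLmul bar ρ x y) = NLmul bar ρ (NLstar bar y) (NLstar bar x) := by
  have hsn : NLstar bar (none : NLCarrier A R) = none := rfl
  cases x with
  | none => rw [NLmul_none_left, hsn, NLmul_none_right]
  | some xt =>
    cases y with
    | none => rw [NLmul_none_right, hsn, NLmul_none_left]
    | some yt =>
      obtain ⟨P1, S1, R1⟩ := xt
      obtain ⟨P2, S2, R2⟩ := yt
      have hstar1 : NLstar bar (some (P1, S1, R1)) = some (bar '' R1, S1, bar '' P1) := rfl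
      have hstar2 : NLstar bar (some (P2, S2, R2)) = some (bar '' R2, S2, bar '' P2) := rfl
      rw [hstar1, hstar2]
      have hiff : (∃ a ∈ R1, bar a ∈ P2) ↔ (∃ a ∈ bar '' P2, bar a ∈ bar '' R1) := by
        constructor
        · rintro ⟨a, ha, hb⟩
          refine ⟨a, ⟨bar a, hb, hbar a⟩, a, ha, rfl⟩
        · rintro ⟨a, ⟨c, hc, rfl⟩, d, hd, he⟩
          have : d = bar c := hbar.injective he
          subst this
          exact ⟨bar c, hd, by rw [hbar]; exact hc⟩
      by_cases h : ∃ a ∈ R1, bar a ∈ P2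
      · rw [NLmul, if_pos h]
        show none = _
        rw [NLmul, if_pos (hiff.mp h)]
      · rw [NLmul, if_neg h, NLmul, if_neg (fun hh => h (hiff.mpr hh))]
        show some _ = some _
        congr 1
        refine Prod.ext ?_ (Prod.ext ?_ ?_)
        · dsimp only
          rw [Set.image_union, image_sep bar ρ hρ]
        · exact Set.union_comm _ _
        · dsimp only
          rw [Set.image_union, image_sep bar ρ hρ]

/-- Word-level morphism. -/
noncomputable def muW : List A → NLCarrier A R
  | [] => NLone
  | a :: l => NLmul bar ρ (NLgen ρ a) (muW l)

lemma muW_nil : muW bar ρ ([] : List A) = NLone := rfl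

lemma muW_cons (a : A) (l : List A) :
    muW bar ρ (a :: l) = NLmul bar ρ (NLgen ρ a) (muW bar ρ l) := rfl

lemma muW_singleton (a : A) : muW bar ρ [a] = NLgen ρ a := by
  rw [muW_cons, muW_nil, NLmul_one_right]

lemma muW_append (hρ : ∀ a, ρ (bar a) = ρ a) (u v : List A) :
    muW bar ρ (u ++ v) = NLmul bar ρ (muW bar ρ u) (muW bar ρ v) := by
  induction u with
  | nil => rw [List.nil_append, muW_nil, NLmul_one_left]
  | cons a l ih =>
    rw [List.cons_append, muW_cons, ih, muW_cons, NLmul_assoc bar ρ hρ]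

lemma muW_respects (hρ : ∀ a, ρ (bar a) = ρ a) (hρne : ∀ a : A, ρ a ≠ ∅) (u v : FreeMonoid A) (h : traceCon A ρ u v) :
    muW bar ρ (FreeMonoid.toList u) = muW bar ρ (FreeMonoid.toList v) := by
  let C : Con (FreeMonoid A) :=
    { r := fun u v => muW bar ρ (FreeMonoid.toList u) = muW bar ρ (FreeMonoid.toList v)
      iseqv := ⟨fun _ => rfl, Eq.symm, Eq.trans⟩
      mul' := fun {w x y z} h1 h2 => by
        show muW bar ρ (FreeMonoid.toList (w * y)) = muW bar ρ (FreeMonoid.toList (x * z))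
        rw [FreeMonoid.toList_mul, FreeMonoid.toList_mul, muW_append bar ρ hρ,
          muW_append bar ρ hρ, h1, h2] }
  refine (Con.conGen_le.mpr ?_ : traceCon A ρ ≤ C) h
  rintro x y ⟨a, b, hab, rfl, rfl⟩
  show muW bar ρ (FreeMonoid.toList (FreeMonoid.of a * FreeMonoid.of b)) =
    muW bar ρ (FreeMonoid.toList (FreeMonoid.of b * FreeMonoid.of a))
  rw [FreeMonoid.toList_mul, FreeMonoid.toList_of, FreeMonoid.toList_of]
  show muW bar ρ [a, b] = muW bar ρ [b, a]
  rw [muW_cons, muW_singleton, muW_cons, muW_singleton]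
  exact NLgen_comm bar ρ hρ hρne hab

/-- The trace-level morphism. -/
noncomputable def muT (hρ : ∀ a, ρ (bar a) = ρ a) (hρne : ∀ a : A, ρ a ≠ ∅) : Trace A ρ → NLCarrier A R :=
  fun g => Con.liftOn g (fun u => muW bar ρ (FreeMonoid.toList u))
    (muW_respects bar ρ hρ hρne)

lemma muT_mk (hρ : ∀ a, ρ (bar a) = ρ a) (hρne : ∀ a : A, ρ a ≠ ∅) (u : FreeMonoid A) :
    muT bar ρ hρ hρne (traceMk ρ u) = muW bar ρ (FreeMonoid.toList u) := rfl

lemma traceMk_ofList_append (l m : List A) :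
    traceMk ρ (FreeMonoid.ofList (l ++ m)) =
      traceMk ρ (FreeMonoid.ofList l) * traceMk ρ (FreeMonoid.ofList m) := by
  have : FreeMonoid.ofList (l ++ m) = FreeMonoid.ofList l * FreeMonoid.ofList m := rfl
  rw [this, map_mul]

lemma traceOf_comm {b c : A} (h : ρ b ∩ ρ c = ∅) :
    traceOf ρ b * traceOf ρ c = traceOf ρ c * traceOf ρ b := by
  have hrel : traceCon A ρ (FreeMonoid.of b * FreeMonoid.of c)
      (FreeMonoid.of c * FreeMonoid.of b) :=
    ConGen.Rel.of _ _ ⟨b, c, h, rfl, rfl⟩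
  rw [show traceOf ρ b * traceOf ρ c =
      traceMk ρ (FreeMonoid.of b * FreeMonoid.of c) from (map_mul _ _ _).symm,
    show traceOf ρ c * traceOf ρ b =
      traceMk ρ (FreeMonoid.of c * FreeMonoid.of b) from (map_mul _ _ _).symm]
  exact ((traceCon A ρ).eq).mpr hrel

/-- If `b` lies in the `R`-component of `muW l`, then the trace of `l` has `b` as a
right factor. -/
lemma muW_right_div (hρ : ∀ a, ρ (bar a) = ρ a) (hρne : ∀ a : A, ρ a ≠ ∅) (l : List A) :
    ∀ P S Rt, muW bar ρ l = some (P, S, Rt) → ∀ b ∈ Rt,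
      ∃ t : Trace A ρ, traceMk ρ (FreeMonoid.ofList l) = t * traceOf ρ b := by
  induction l using List.reverseRecOn with
  | nil =>
    intro P S Rt h b hb
    simp only [muW_nil, NLone, Option.some.injEq, Prod.mk.injEq] at h
    obtain ⟨-, -, h3⟩ := h
    rw [← h3] at hb
    exact absurd hb (Set.notMem_empty b)
  | append_singleton l c ih =>
    intro P S Rt h b hb
    rw [muW_append bar ρ hρ, muW_singleton] at h
    cases hml : muW bar ρ l with
    | none => rw [hml, NLmul_none_left] at h; exact absurd h (by simp)
    | some t =>
      obtain ⟨P1, S1, R1⟩ := t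
      rw [hml] at h
      by_cases hcond : ∃ x ∈ R1, bar x ∈ ({c} : Set A)
      · rw [show NLgen ρ c = some ({c}, ρ c, {c}) from rfl, NLmul, if_pos hcond] at h
        exact absurd h (by simp)
      · rw [show NLgen ρ c = some ({c}, ρ c, {c}) from rfl, NLmul, if_neg hcond] at h
        simp only [Option.some.injEq, Prod.mk.injEq] at h
        obtain ⟨-, -, hR⟩ := h
        have hb' : b ∈ ({c} : Set A) ∪ {x ∈ R1 | ρ x ∩ ρ c = ∅} := by
          rw [hR]; exact hb
        rcases hb' with hbc | ⟨hbR, hdisj⟩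
        · rw [Set.mem_singleton_iff] at hbc
          subst hbc
          exact ⟨traceMk ρ (FreeMonoid.ofList l), by
            rw [traceMk_ofList_append]; rfl⟩
        · obtain ⟨t, ht⟩ := ih P1 S1 R1 hml b hbR
          refine ⟨t * traceOf ρ c, ?_⟩
          rw [traceMk_ofList_append]
          have hc1 : traceMk ρ (FreeMonoid.ofList [c]) = traceOf ρ c := rfl
          rw [hc1, ht, mul_assoc, traceOf_comm ρ hdisj, ← mul_assoc]

/-- If `muW` kills a word, the word has an `a ā` factor up to trace equivalence. -/
lemma muW_kills (hρ : ∀ a, ρ (bar a) = ρ a) (hbar : Function.Involutive bar) (hρne : ∀ a : A, ρ a ≠ ∅) (l : List A) (h : muW bar ρ l = none) :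
    ∃ (p q : Trace A ρ) (a : A),
      traceMk ρ (FreeMonoid.ofList l) =
        p * (traceOf ρ a * traceOf ρ (bar a)) * q := by
  induction l using List.reverseRecOn with
  | nil => exact absurd h (by simp [muW_nil, NLone])
  | append_singleton l c ih =>
    rw [muW_append bar ρ hρ, muW_singleton] at h
    cases hml : muW bar ρ l with
    | none =>
      obtain ⟨p, q, a, he⟩ := ih hml
      refine ⟨p, q * traceOf ρ c, a, ?_⟩
      rw [traceMk_ofList_append]
      have hc1 : traceMk ρ (FreeMonoid.ofList [c]) = traceOf ρ c := rfl
      rw [hc1, he, mul_assoc]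
    | some t =>
      obtain ⟨P1, S1, R1⟩ := t
      rw [hml] at h
      by_cases hcond : ∃ x ∈ R1, bar x ∈ ({c} : Set A)
      · obtain ⟨x, hx, hxc⟩ := hcond
        rw [Set.mem_singleton_iff] at hxc
        obtain ⟨t, ht⟩ := muW_right_div bar ρ hρ hρne l P1 S1 R1 hml x hx
        refine ⟨t, 1, x, ?_⟩
        rw [traceMk_ofList_append]
        have hc1 : traceMk ρ (FreeMonoid.ofList [c]) = traceOf ρ c := rfl
        rw [hc1, ht, ← hxc, mul_one, mul_assoc]
      · rw [show NLgen ρ c = some ({c}, ρ c, {c}) from rfl, NLmul, if_neg hcond] at h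
        exact absurd h (by simp)

/-- Any function satisfying the four conditions agrees with `muW` on words. -/
lemma mu_eq_muW (μ : Trace A ρ → NLCarrier A R)
    (h1 : μ 1 = NLone)
    (h2 : ∀ x y : Trace A ρ, μ (x * y) = NLmul bar ρ (μ x) (μ y))
    (h4 : ∀ a : A, μ (traceOf ρ a) = some ({a}, ρ a, {a})) :
    ∀ l : List A, μ (traceMk ρ (FreeMonoid.ofList l)) = muW bar ρ l := by
  intro l
  induction l with
  | nil =>
    rw [muW_nil]
    have : traceMk ρ (FreeMonoid.ofList ([] : List A)) = 1 := map_one _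
    rw [this, h1]
  | cons a l ih =>
    rw [FreeMonoid.ofList_cons, map_mul, h2, ih, muW_cons]
    congr 1
    exact h4 a

end Aux

/-- There is a unique morphism of monoids with involution
`μ_L : M(A,ρ) → N_L` with `μ_L(a) = ({a}, ρ(a), {a})` for every letter `a`; and for every
trace `g`, `μ_L(g) ≠ 0` if and only if `g` is reduced (has no factor `a ā`). -/
theorem stmt_10 {R : Type u} [Fintype R] {A : Type u} [Fintype A]
    (bar : A → A) (hbar : Function.Involutive bar)
    (ρ : A → Set R) (hρ : ∀ a, ρ (bar a) = ρ a) (hρne : ∀ a : A, ρ a ≠ ∅) :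
    (∃! μ : Trace A ρ → NLCarrier A R,
      μ 1 = NLone ∧
      (∀ x y : Trace A ρ, μ (x * y) = NLmul bar ρ (μ x) (μ y)) ∧
      (∀ u : FreeMonoid A,
        μ (traceMk ρ (wordStar bar u)) = NLstar bar (μ (traceMk ρ u))) ∧
      (∀ a : A, μ (traceOf ρ a) = some ({a}, ρ a, {a}))) ∧
    ∀ μ : Trace A ρ → NLCarrier A R,
      (μ 1 = NLone ∧
       (∀ x y : Trace A ρ, μ (x * y) = NLmul bar ρ (μ x) (μ y)) ∧
       (∀ u : FreeMonoid A,
         μ (traceMk ρ (wordStar bar u)) = NLstar bar (μ (traceMk ρ u))) ∧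
       (∀ a : A, μ (traceOf ρ a) = some ({a}, ρ a, {a}))) →
      ∀ g : Trace A ρ, μ g ≠ none ↔
        ¬ ∃ (p q : Trace A ρ) (a : A),
            g = p * (traceOf ρ a * traceOf ρ (bar a)) * q := by
  set μ₀ : Trace A ρ → NLCarrier A R := muT bar ρ hρ hρne with hμ₀
  have hmk : ∀ u : FreeMonoid A, μ₀ (traceMk ρ u) = muW bar ρ (FreeMonoid.toList u) :=
    fun u => rfl
  have p1 : μ₀ 1 = NLone := rfl
  have p2 : ∀ x y : Trace A ρ, μ₀ (x * y) = NLmul bar ρ (μ₀ x) (μ₀ y) := by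
    intro x y
    refine Con.induction_on x fun u => Con.induction_on y fun v => ?_
    have hc : (u : Trace A ρ) * (v : Trace A ρ) = ((u * v : FreeMonoid A) : Trace A ρ) := rfl
    show μ₀ (traceMk ρ (u * v)) = NLmul bar ρ (μ₀ (traceMk ρ u)) (μ₀ (traceMk ρ v))
    rw [hmk, hmk, hmk, FreeMonoid.toList_mul, muW_append bar ρ hρ]
  have pstarW : ∀ l : List A,
      muW bar ρ ((l.map bar).reverse) = NLstar bar (muW bar ρ l) := by
    intro l
    induction l with
    | nil =>
      show NLone = NLstar bar NLone
      rw [NLone, NLstar]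
      congr 1
      refine Prod.ext ?_ (Prod.ext rfl ?_) <;> simp
    | cons a l ih =>
      rw [List.map_cons, List.reverse_cons, muW_append bar ρ hρ, ih, muW_singleton,
        ← NLstar_gen bar ρ hρ, ← NLstar_mul bar ρ hρ hbar, muW_cons]
  have p3 : ∀ u : FreeMonoid A,
      μ₀ (traceMk ρ (wordStar bar u)) = NLstar bar (μ₀ (traceMk ρ u)) := by
    intro u
    rw [hmk, hmk, wordStar, FreeMonoid.toList_ofList]
    exact pstarW (FreeMonoid.toList u)
  have p4 : ∀ a : A, μ₀ (traceOf ρ a) = some ({a}, ρ a, {a}) := by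
    intro a
    rw [show traceOf ρ a = traceMk ρ (FreeMonoid.of a) from rfl, hmk, FreeMonoid.toList_of,
      muW_singleton]
    rfl
  have huniq : ∀ μ : Trace A ρ → NLCarrier A R,
      (μ 1 = NLone ∧
       (∀ x y : Trace A ρ, μ (x * y) = NLmul bar ρ (μ x) (μ y)) ∧
       (∀ u : FreeMonoid A,
         μ (traceMk ρ (wordStar bar u)) = NLstar bar (μ (traceMk ρ u))) ∧
       (∀ a : A, μ (traceOf ρ a) = some ({a}, ρ a, {a}))) →
      ∀ g : Trace A ρ, μ g = μ₀ g := by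
    rintro μ ⟨h1, h2, h3, h4⟩ g
    refine Con.induction_on g fun u => ?_
    have e : (u : Trace A ρ) = traceMk ρ (FreeMonoid.ofList (FreeMonoid.toList u)) := by
      rw [FreeMonoid.ofList_toList]; rfl
    rw [e, mu_eq_muW bar ρ μ h1 h2 h4, mu_eq_muW bar ρ μ₀ p1 p2 p4]
  constructor
  · exact ⟨μ₀, ⟨p1, p2, p3, p4⟩, fun μ h => funext (huniq μ h)⟩
  · rintro μ hμ g
    have hg0 : μ g = μ₀ g := huniq μ hμ g
    obtain ⟨h1, h2, h3, h4⟩ := hμ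
    rw [hg0]
    rw [not_iff_not.symm, not_ne_iff, not_not]
    constructor
    · intro hnone
      obtain ⟨u, rfl⟩ := Con.mk'_surjective (c := traceCon A ρ) g
      have : muW bar ρ (FreeMonoid.toList u) = none := hnone
      obtain ⟨p, q, a, he⟩ := muW_kills bar ρ hρ hbar hρne (FreeMonoid.toList u) this
      rw [FreeMonoid.ofList_toList] at he
      exact ⟨p, q, a, he⟩
    · rintro ⟨p, q, a, rfl⟩
      rw [p2, p2, p2, p4, p4]
      rw [show NLmul bar ρ (some ({a}, ρ a, {a})) (some ({bar a}, ρ (bar a), {bar a})) =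
          none by rw [NLmul, if_pos ⟨a, rfl, rfl⟩],
        NLmul_none_right, NLmul_none_left]
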